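/- Fix positive integers m and n. Let 𝓘_m = {α ∈ ℕⁿ : |α| ≤ m}, N = #𝓘_m, v(x) = (e^{2⟨α+𝟏,x⟩})_{α∈𝓘_m} ∈ ℝᴺ for x ∈ ℝⁿ, and A = (A_α)_{α∈𝓘_m} with A_α = (1/(2π)ⁿ) · α!(m−|α|)!/m!. Then there exist an integer M ≥ N, points p₁,…,p_M ∈ ℝⁿ, and positive coefficients a₁,…,a_M > 0 such that A = Σ_{j=1}^M aⱼ v(pⱼ), the vectors v(p₁),…,v(p_M) span ℝᴺ, and moreover the points can be chosen so that v(p₁),…,v(p_N) are linearly independent; in particular the N×N matrix L with columns v(p₁),…,v(p_N) is invertible. -/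

import Mathlib

open Real

/-- The index set `𝓘_m = {α ∈ ℕⁿ : |α| ≤ m}`. -/
def IndexSet (m n : ℕ) : Type := {α : Fin n → ℕ // ∑ j, α j ≤ m}

/-- The moment-vector map `v(x) = (e^{2⟨α+𝟏,x⟩})_{α ∈ 𝓘_m}`. -/
noncomputable def vMap (m n : ℕ) (x : Fin n → ℝ) : IndexSet m n → ℝ :=
  fun α => Real.exp (2 * ∑ j, ((α.1 j : ℝ) + 1) * x j)

/-- The target moment data `A = (A_α)_{α ∈ 𝓘_m}`, `A_α = (2π)^{-n} α!(m−|α|)!/m!`. -/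
noncomputable def AVec (m n : ℕ) : IndexSet m n → ℝ :=
  fun α => (1 / (2 * π) ^ n) *
    ((∏ j, ((α.1 j).factorial : ℝ)) * ((m - ∑ j, α.1 j).factorial : ℝ)
      / (m.factorial : ℝ))

open MeasureTheory

instance (m n : ℕ) : DecidableEq (IndexSet m n) :=
  show DecidableEq {α : Fin n → ℕ // ∑ j, α j ≤ m} from inferInstance

instance (m n : ℕ) : Finite (IndexSet m n) := by
  apply Finite.of_injective
    (fun (α : IndexSet m n) (j : Fin n) =>
      (⟨min (α.1 j) m, Nat.lt_succ_of_le (min_le_right _ _)⟩ : Fin (m+1)))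
  intro a b hab
  have hle : ∀ (c : IndexSet m n) (j : Fin n), c.1 j ≤ m := fun c j =>
    le_trans (Finset.single_le_sum (f := c.1) (fun _ _ => Nat.zero_le _) (Finset.mem_univ j)) c.2
  apply Subtype.ext; funext j
  have := congrFun hab j
  simpa [Fin.ext_iff, min_eq_left (hle a j), min_eq_left (hle b j)] using this

noncomputable instance (m n : ℕ) : Fintype (IndexSet m n) := Fintype.ofFinite _

/-- The character attached to an index. -/
noncomputable def chi (m n : ℕ) (α : IndexSet m n) : Multiplicative (Fin n → ℝ) →* ℝ where
  toFun x := Real.exp (2 * ∑ j, ((α.1 j : ℝ) + 1) * (Multiplicative.toAdd x) j)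
  map_one' := by simp
  map_mul' x y := by
    have h : ∑ j, ((α.1 j : ℝ) + 1) * (Multiplicative.toAdd (x*y)) j
        = (∑ j, ((α.1 j : ℝ) + 1) * (Multiplicative.toAdd x) j)
          + ∑ j, ((α.1 j : ℝ) + 1) * (Multiplicative.toAdd y) j := by
      rw [← Finset.sum_add_distrib]
      apply Finset.sum_congr rfl; intro j _
      simp only [toAdd_mul, Pi.add_apply]; ring
    show Real.exp _ = _
    rw [h, mul_add, Real.exp_add]

lemma chi_injective (m n : ℕ) : Function.Injective (chi m n) := by
  intro a b hab
  apply Subtype.ext; funext j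
  have := DFunLike.congr_fun hab (Multiplicative.ofAdd (Pi.single j (1:ℝ)))
  simp only [chi, MonoidHom.coe_mk, OneHom.coe_mk, toAdd_ofAdd] at this
  have h2 := Real.exp_injective this
  have hs : ∀ (c : Fin n → ℕ), ∑ k, ((c k : ℝ) + 1) * ((Pi.single j 1 : Fin n → ℝ) k) = (c j : ℝ) + 1 := by
    intro c
    rw [Finset.sum_eq_single j]
    · simp
    · intro k _ hk; simp [Pi.single_apply, hk]
    · simp
  rw [hs, hs] at h2
  have : (a.1 j : ℝ) = b.1 j := by linarith [mul_left_cancel₀ (two_ne_zero (α := ℝ)) h2]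
  exact_mod_cast this

lemma vanish_of_ortho (m n : ℕ) (c : IndexSet m n → ℝ)
    (h : ∀ p : Fin n → ℝ, ∑ α, vMap m n p α * c α = 0) : c = 0 := by
  have hli : LinearIndependent ℝ (fun α : IndexSet m n => ((chi m n α) : Multiplicative (Fin n → ℝ) → ℝ)) :=
    (linearIndependent_monoidHom (Multiplicative (Fin n → ℝ)) ℝ).comp _ (chi_injective m n)
  have hz : ∑ α, c α • (fun x => (chi m n α) x) = (0 : Multiplicative (Fin n → ℝ) → ℝ) := by
    funext x
    have := h (Multiplicative.toAdd x)
    simpa [chi, vMap, mul_comm] using this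
  funext α
  exact Fintype.linearIndependent_iff.1 hli c hz α

lemma span_vMap (m n : ℕ) : Submodule.span ℝ (Set.range (vMap m n)) = ⊤ := by
  by_contra hne
  obtain ⟨f, hf0, hfmap⟩ := Submodule.exists_dual_map_eq_bot_of_lt_top
    (lt_top_iff_ne_top.2 hne) inferInstance
  have hvan : ∀ p, f (vMap m n p) = 0 := by
    intro p
    have : f (vMap m n p) ∈ (Submodule.span ℝ (Set.range (vMap m n))).map f :=
      Submodule.mem_map_of_mem (Submodule.subset_span ⟨p, rfl⟩)
    rw [hfmap] at this
    simpa using this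
  apply hf0
  have hrep := fun x => LinearMap.pi_apply_eq_sum_univ f x
  have hc : (fun α : IndexSet m n => f (fun j => if α = j then (1:ℝ) else 0))
      = (0 : IndexSet m n → ℝ) := by
    apply vanish_of_ortho m n
    intro p
    have h2 := hvan p
    rw [hrep] at h2
    simpa [smul_eq_mul] using h2
  apply LinearMap.ext; intro x
  rw [hrep x]
  simp only [LinearMap.zero_apply]
  apply Finset.sum_eq_zero; intro α _
  rw [smul_eq_mul, congrFun hc α]
  simp

noncomputable def gg (k : ℕ) : ℝ → ℝ :=
  Set.indicator (Set.Ioi 0) (fun t => t ^ k * Real.exp (-t))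

lemma integrableOn_pow_exp (k : ℕ) :
    IntegrableOn (fun t : ℝ => t ^ k * Real.exp (-t)) (Set.Ioi 0) := by
  have h := Real.GammaIntegral_convergent (s := (k+1 : ℝ)) (by positivity)
  apply h.congr_fun ?_ measurableSet_Ioi
  intro x hx
  simp only [add_sub_cancel_right, Real.rpow_natCast]
  ring

lemma integrable_gg (k : ℕ) : Integrable (gg k) :=
  (integrableOn_pow_exp k).integrable_indicator measurableSet_Ioi

lemma gg_nonneg (k : ℕ) (t : ℝ) : 0 ≤ gg k t := by
  apply Set.indicator_nonneg
  intro x hx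
  have : (0:ℝ) < x := hx
  positivity

lemma gg_pos (k : ℕ) {t : ℝ} (ht : 0 < t) : gg k t = t ^ k * Real.exp (-t) :=
  Set.indicator_of_mem ht _

lemma gg_zero (k : ℕ) {t : ℝ} (ht : ¬ (0 < t)) : gg k t = 0 :=
  Set.indicator_of_notMem ht _

lemma integral_gg (k : ℕ) : ∫ t, gg k t = (k.factorial : ℝ) := by
  rw [gg, integral_indicator measurableSet_Ioi]
  have h := Real.Gamma_eq_integral (s := (k+1 : ℝ)) (by positivity)
  have h2 : ((k:ℝ) + 1) = ((k + 1 : ℕ) : ℝ) := by push_cast; ring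
  rw [Real.Gamma_nat_eq_factorial k] at h
  rw [h]
  apply setIntegral_congr_fun measurableSet_Ioi
  intro x hx
  simp only [add_sub_cancel_right, Real.rpow_natCast]
  ring

/-- exponents: coordinate 0 gets `m - |α|`, coordinate `j.succ` gets `α j`. -/
def expo (m n : ℕ) (α : IndexSet m n) : Fin (n+1) → ℕ :=
  Fin.cons (m - ∑ j, α.1 j) (fun j => α.1 j)

noncomputable def PP (m n : ℕ) (α : IndexSet m n) : (Fin (n+1) → ℝ) → ℝ :=
  fun y => ∏ i, gg (expo m n α i) (y i)

lemma integrable_PP (m n : ℕ) (α : IndexSet m n) : Integrable (PP m n α) :=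
  Integrable.fintype_prod (f := fun i t => gg (expo m n α i) t) (fun i => integrable_gg _)

lemma integral_PP (m n : ℕ) (α : IndexSet m n) :
    ∫ y, PP m n α y
      = (∏ j, ((α.1 j).factorial : ℝ)) * ((m - ∑ j, α.1 j).factorial : ℝ) := by
  simp only [PP]
  rw [MeasureTheory.integral_fintype_prod_volume_eq_prod (f := fun i t => gg (expo m n α i) t)]
  simp only [integral_gg]
  rw [Fin.prod_univ_succ]
  simp only [expo, Fin.cons_zero, Fin.cons_succ]
  ring

lemma AVec_eq (m n : ℕ) (α : IndexSet m n) :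
    AVec m n α = (1 / (2 * π) ^ n) / (m.factorial : ℝ) * ∫ y, PP m n α y := by
  rw [integral_PP, AVec]
  ring

noncomputable def pt (n : ℕ) (y : Fin (n+1) → ℝ) : Fin n → ℝ :=
  fun j => (Real.log (y j.succ) - Real.log (y 0)) / 2

noncomputable def wgt (m n : ℕ) (y : Fin (n+1) → ℝ) : ℝ :=
  (y 0) ^ (m + n) * (∏ j : Fin n, (y j.succ)⁻¹) * Real.exp (- ∑ i, y i)

lemma wgt_pos (m n : ℕ) {y : Fin (n+1) → ℝ} (hy : ∀ i, 0 < y i) : 0 < wgt m n y := by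
  have h0 : (0:ℝ) < y 0 := hy 0
  have hp : (0:ℝ) < ∏ j : Fin n, (y j.succ)⁻¹ :=
    Finset.prod_pos (fun j _ => inv_pos.2 (hy j.succ))
  exact mul_pos (mul_pos (pow_pos h0 _) hp) (Real.exp_pos _)

lemma vMap_pt (m n : ℕ) (α : IndexSet m n) {y : Fin (n+1) → ℝ} (hy : ∀ i, 0 < y i) :
    vMap m n (pt n y) α
      = (∏ j, (y j.succ) ^ (α.1 j + 1)) / (y 0) ^ ((∑ j, α.1 j) + n) := by
  have h1 : 2 * ∑ j, ((α.1 j : ℝ) + 1) * pt n y j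
      = ∑ j, (((α.1 j + 1 : ℕ) : ℝ) * Real.log (y j.succ)
            - ((α.1 j + 1 : ℕ) : ℝ) * Real.log (y 0)) := by
    rw [Finset.mul_sum]
    apply Finset.sum_congr rfl
    intro j _
    simp only [pt]
    push_cast
    ring
  rw [vMap, h1, Finset.sum_sub_distrib, Real.exp_sub, Real.exp_sum, Real.exp_sum]
  congr 1
  · apply Finset.prod_congr rfl
    intro j _
    rw [Real.exp_nat_mul, Real.exp_log (hy j.succ)]
  · rw [← Real.exp_sum, ← Finset.sum_mul]
    have h2 : ∑ j : Fin n, ((α.1 j + 1 : ℕ) : ℝ) = (((∑ j, α.1 j) + n : ℕ) : ℝ) := by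
      push_cast
      rw [Finset.sum_add_distrib]
      simp [Finset.card_univ]
    rw [h2, Real.exp_nat_mul, Real.exp_log (hy 0)]

lemma PP_eq (m n : ℕ) (α : IndexSet m n) {y : Fin (n+1) → ℝ} (hy : ∀ i, 0 < y i) :
    PP m n α y = wgt m n y * vMap m n (pt n y) α := by
  have h0 : (0:ℝ) < y 0 := hy 0
  have hαm : (∑ j, α.1 j) ≤ m := α.2
  -- LHS
  have hL : PP m n α y
      = ((y 0) ^ (m - ∑ j, α.1 j) * Real.exp (-(y 0)))
        * ∏ j : Fin n, ((y j.succ) ^ (α.1 j) * Real.exp (-(y j.succ))) := by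
    simp only [PP]
    rw [Fin.prod_univ_succ]
    congr 1
    · rw [gg_pos _ h0]; simp [expo]
    · apply Finset.prod_congr rfl
      intro j _
      rw [gg_pos _ (hy j.succ)]; simp [expo]
  rw [hL, vMap_pt m n α hy, wgt]
  -- exp splitting
  have hexp : Real.exp (- ∑ i, y i)
      = Real.exp (-(y 0)) * ∏ j : Fin n, Real.exp (-(y j.succ)) := by
    rw [Fin.sum_univ_succ, neg_add, Real.exp_add, ← Real.exp_sum]
    congr 1
    rw [← Finset.sum_neg_distrib]
  -- pow splitting
  have hpow : (y 0) ^ (m + n) = (y 0) ^ ((∑ j, α.1 j) + n) * (y 0) ^ (m - ∑ j, α.1 j) := by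
    rw [← pow_add]
    congr 1
    omega
  -- product splitting
  have hprod : ∏ j : Fin n, (y j.succ) ^ (α.1 j + 1)
      = (∏ j : Fin n, (y j.succ) ^ (α.1 j)) * ∏ j : Fin n, (y j.succ) := by
    rw [← Finset.prod_mul_distrib]
    apply Finset.prod_congr rfl
    intro j _
    rw [pow_succ]
  have hprodinv : (∏ j : Fin n, (y j.succ)⁻¹) * (∏ j : Fin n, (y j.succ)) = 1 := by
    rw [← Finset.prod_mul_distrib]
    apply Finset.prod_eq_one
    intro j _
    exact inv_mul_cancel₀ (ne_of_gt (hy j.succ))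
  have hy0ne : (y 0) ^ ((∑ j, α.1 j) + n) ≠ 0 := pow_ne_zero _ (ne_of_gt h0)
  have hF : (∏ j : Fin n, (y j.succ)⁻¹) = (∏ j : Fin n, (y j.succ))⁻¹ := by
    rw [Finset.prod_inv_distrib]
  have hEne : (∏ j : Fin n, (y j.succ)) ≠ 0 :=
    ne_of_gt (Finset.prod_pos fun j _ => hy j.succ)
  rw [Finset.prod_mul_distrib, hexp, hpow, hprod, hF]
  generalize hPP : (y 0) ^ ((∑ j, α.1 j) + n) = P at hy0ne ⊢
  field_simp

lemma key_lemma (m n : ℕ) (f : (IndexSet m n → ℝ) →L[ℝ] ℝ)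
    (hpos : ∀ p, 0 ≤ f (vMap m n p)) (hA : f (AVec m n) ≤ 0) : f = 0 := by
  classical
  set c : IndexSet m n → ℝ := fun α => f (fun j => if α = j then (1:ℝ) else 0) with hc
  have hrep : ∀ x : IndexSet m n → ℝ, f x = ∑ α, x α * c α := by
    intro x
    have := LinearMap.pi_apply_eq_sum_univ (f : (IndexSet m n → ℝ) →ₗ[ℝ] ℝ) x
    simpa [smul_eq_mul, hc] using this
  set Φ : (Fin (n+1) → ℝ) → ℝ := fun y => ∑ α, c α * PP m n α y with hΦ
  have hintg : ∀ α ∈ Finset.univ (α := IndexSet m n),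
      Integrable (fun y => c α * PP m n α y) :=
    fun α _ => (integrable_PP m n α).const_mul _
  have hint : Integrable Φ := by
    rw [hΦ]
    exact integrable_finset_sum _ hintg
  have hiΦ : ∫ y, Φ y = ∑ α, c α * ∫ y, PP m n α y := by
    rw [hΦ, integral_finset_sum _ hintg]
    exact Finset.sum_congr rfl fun α _ => integral_const_mul _ _
  have hK : (0:ℝ) < (1 / (2 * π) ^ n) / (m.factorial : ℝ) := by
    have : (0:ℝ) < π := Real.pi_pos
    have : (0:ℝ) < (2*π)^n := by positivity
    have hm : (0:ℝ) < (m.factorial : ℝ) := by exact_mod_cast m.factorial_pos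
    positivity
  have hfA : f (AVec m n) = ((1 / (2 * π) ^ n) / (m.factorial : ℝ)) * ∫ y, Φ y := by
    rw [hrep, hiΦ, Finset.mul_sum]
    apply Finset.sum_congr rfl
    intro α _
    rw [AVec_eq m n α]
    ring
  -- pointwise form on the positive orthant
  have hΦpos : ∀ y : Fin (n+1) → ℝ, (∀ i, 0 < y i) →
      Φ y = wgt m n y * f (vMap m n (pt n y)) := by
    intro y hy
    rw [hΦ, hrep (vMap m n (pt n y)), Finset.mul_sum]
    apply Finset.sum_congr rfl
    intro α _
    rw [PP_eq m n α hy]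
    ring
  have hΦ0 : ∀ y, 0 ≤ Φ y := by
    intro y
    by_cases hy : ∀ i, 0 < y i
    · rw [hΦpos y hy]
      exact mul_nonneg (wgt_pos m n hy).le (hpos _)
    · push_neg at hy
      obtain ⟨i, hi⟩ := hy
      have hz : ∀ α ∈ Finset.univ (α := IndexSet m n), c α * PP m n α y = 0 := by
        intro α _
        have : PP m n α y = 0 := by
          simp only [PP]
          exact Finset.prod_eq_zero (Finset.mem_univ i) (gg_zero _ (not_lt.2 hi))
        rw [this, mul_zero]
      rw [hΦ]
      simp only [Finset.sum_congr rfl hz, Finset.sum_const_zero]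
      exact le_refl 0
  have hintΦ0 : ∫ y, Φ y = 0 := by
    have h1 : 0 ≤ ∫ y, Φ y := integral_nonneg hΦ0
    have h2 : ((1 / (2 * π) ^ n) / (m.factorial : ℝ)) * ∫ y, Φ y ≤ 0 := hfA ▸ hA
    nlinarith
  have hae : Φ =ᵐ[(volume : Measure (Fin (n+1) → ℝ))] 0 :=
    (integral_eq_zero_iff_of_nonneg hΦ0 hint).1 hintΦ0
  -- continuous surrogate
  set Ψ : (Fin (n+1) → ℝ) → ℝ :=
    fun y => ∑ α, c α * ∏ i, ((y i) ^ (expo m n α i) * Real.exp (-(y i))) with hΨ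
  have hΨc : Continuous Ψ := by
    apply continuous_finset_sum
    intro α _
    apply Continuous.mul continuous_const
    apply continuous_finset_prod
    intro i _
    exact ((continuous_apply i).pow _).mul ((continuous_apply i).neg.rexp)
  set O : Set (Fin (n+1) → ℝ) := {y | ∀ i, 0 < y i} with hO
  have hOopen : IsOpen O := by
    have : O = ⋂ i, (fun y : Fin (n+1) → ℝ => y i) ⁻¹' Set.Ioi 0 := by
      ext y; simp [hO]
    rw [this]
    exact isOpen_iInter_of_finite fun i => (continuous_apply i).isOpen_preimage _ isOpen_Ioi
  have hΦΨ : ∀ y ∈ O, Φ y = Ψ y := by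
    intro y hy
    rw [hΦ, hΨ]
    apply Finset.sum_congr rfl
    intro α _
    congr 1
    simp only [PP]
    exact Finset.prod_congr rfl fun i _ => gg_pos _ (hy i)
  have hΨ0 : ∀ y ∈ O, Ψ y = 0 := by
    intro y₀ hy₀
    by_contra hne
    set U : Set (Fin (n+1) → ℝ) := O ∩ (Ψ ⁻¹' {0}ᶜ) with hU
    have hUopen : IsOpen U := hOopen.inter (hΨc.isOpen_preimage _ (isOpen_compl_singleton))
    have hUne : U.Nonempty := ⟨y₀, hy₀, hne⟩
    have hnull : (volume : Measure (Fin (n+1) → ℝ)) {y | ¬ Φ y = 0} = 0 := by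
      simpa [Filter.EventuallyEq, MeasureTheory.ae_iff] using hae
    have hsub : U ⊆ {y | ¬ Φ y = 0} := by
      intro y hy
      simp only [Set.mem_setOf_eq]
      rw [hΦΨ y hy.1]
      exact hy.2
    exact (hUopen.measure_pos volume hUne).ne' (measure_mono_null hsub hnull)
  -- conclude vanishing on all vMap points
  have hvan : ∀ p, f (vMap m n p) = 0 := by
    intro p
    set y : Fin (n+1) → ℝ := Fin.cons 1 (fun j => Real.exp (2 * p j)) with hy
    have hyO : ∀ i, 0 < y i := by
      intro i
      refine Fin.cases ?_ ?_ i <;> simp [hy]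
      · exact fun j => Real.exp_pos _
    have hpt : pt n y = p := by
      funext j
      simp only [pt, hy, Fin.cons_succ, Fin.cons_zero, Real.log_one, Real.log_exp]
      ring
    have h1 : Φ y = 0 := by rw [hΦΨ y hyO]; exact hΨ0 y hyO
    rw [hΦpos y hyO, hpt] at h1
    rcases mul_eq_zero.1 h1 with h | h
    · exact absurd h (ne_of_gt (wgt_pos m n hyO))
    · exact h
  -- conclude f = 0
  have hall : ∀ x ∈ Submodule.span ℝ (Set.range (vMap m n)), f x = 0 := by
    intro x hx
    induction hx using Submodule.span_induction with
    | mem _ h => obtain ⟨p, rfl⟩ := h; exact hvan p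
    | zero => simp
    | add u v _ _ hu hv => rw [map_add, hu, hv, add_zero]
    | smul a u _ hu => rw [_root_.map_smul, hu, smul_zero]
  apply ContinuousLinearMap.ext
  intro x
  rw [hall x (by rw [span_vMap m n]; trivial)]
  simp

/-- The set of strictly-positive finite combinations of moment vectors. -/
def Cne (m n : ℕ) : Set (IndexSet m n → ℝ) :=
  {w | ∃ (K : ℕ) (q : Fin K → (Fin n → ℝ)) (b : Fin K → ℝ),
    (∀ k, 0 < b k) ∧ w = ∑ k, b k • vMap m n (q k)}

lemma vMap_mem_Cne (m n : ℕ) (p : Fin n → ℝ) : vMap m n p ∈ Cne m n :=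
  ⟨1, fun _ => p, fun _ => 1, fun _ => one_pos, by simp⟩

lemma Cne_add (m n : ℕ) {w₁ w₂ : IndexSet m n → ℝ}
    (h₁ : w₁ ∈ Cne m n) (h₂ : w₂ ∈ Cne m n) : w₁ + w₂ ∈ Cne m n := by
  obtain ⟨K₁, q₁, b₁, hb₁, rfl⟩ := h₁
  obtain ⟨K₂, q₂, b₂, hb₂, rfl⟩ := h₂
  refine ⟨K₁ + K₂, Fin.append q₁ q₂, Fin.append b₁ b₂, ?_, ?_⟩
  · intro k
    refine Fin.addCases (fun i => ?_) (fun i => ?_) k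
    · rw [Fin.append_left]; exact hb₁ i
    · rw [Fin.append_right]; exact hb₂ i
  · rw [Fin.sum_univ_add]
    congr 1
    · exact Finset.sum_congr rfl fun i _ => by rw [Fin.append_left, Fin.append_left]
    · exact Finset.sum_congr rfl fun i _ => by rw [Fin.append_right, Fin.append_right]

lemma Cne_smul (m n : ℕ) {w : IndexSet m n → ℝ} {t : ℝ} (ht : 0 < t)
    (h : w ∈ Cne m n) : t • w ∈ Cne m n := by
  obtain ⟨K, q, b, hb, rfl⟩ := h
  refine ⟨K, q, fun k => t * b k, fun k => mul_pos ht (hb k), ?_⟩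
  rw [Finset.smul_sum]
  exact Finset.sum_congr rfl fun k _ => by rw [smul_smul]

lemma Cne_convex (m n : ℕ) : Convex ℝ (Cne m n) := by
  intro x hx y hy a b ha hb hab
  rcases eq_or_lt_of_le ha with ha0 | ha0
  · have hb1 : b = 1 := by linarith
    simp [← ha0, hb1, hy]
  rcases eq_or_lt_of_le hb with hb0 | hb0
  · have ha1 : a = 1 := by linarith
    simp [← hb0, ha1, hx]
  exact Cne_add m n (Cne_smul m n ha0 hx) (Cne_smul m n hb0 hy)

lemma Cne_interior_nonempty (m n : ℕ) : (interior (Cne m n)).Nonempty := by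
  rw [(Cne_convex m n).interior_nonempty_iff_affineSpan_eq_top]
  rw [AffineSubspace.affineSpan_eq_top_iff_vectorSpan_eq_top_of_nonempty ℝ _ _
    ⟨vMap m n 0, vMap_mem_Cne m n 0⟩]
  rw [eq_top_iff, ← span_vMap m n]
  rw [vectorSpan_def]
  apply Submodule.span_le.2
  rintro _ ⟨p, rfl⟩
  apply Submodule.subset_span
  refine ⟨vMap m n p + vMap m n p, ?_, vMap m n p, vMap_mem_Cne m n p, by show _ -ᵥ _ = _; rw [vsub_eq_sub]; abel⟩
  exact Cne_add m n (vMap_mem_Cne m n p) (vMap_mem_Cne m n p)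

lemma zero_mem_closure_Cne (m n : ℕ) : (0 : IndexSet m n → ℝ) ∈ closure (Cne m n) := by
  have ht : Filter.Tendsto (fun t : ℝ => t • vMap m n 0) (nhdsWithin 0 (Set.Ioi 0))
      (nhds (0 : IndexSet m n → ℝ)) := by
    have : Filter.Tendsto (fun t : ℝ => t • vMap m n 0) (nhds 0)
        (nhds ((0:ℝ) • vMap m n 0)) := (continuous_id.smul continuous_const).tendsto 0
    rw [zero_smul] at this
    exact this.mono_left nhdsWithin_le_nhds
  exact mem_closure_of_tendsto ht
    (Filter.eventually_of_mem self_mem_nhdsWithin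
      (fun t (htp : t ∈ Set.Ioi 0) => Cne_smul m n htp (vMap_mem_Cne m n 0)))

lemma AVec_mem_interior (m n : ℕ) :
    AVec m n ∈ interior (closure (Cne m n)) := by
  by_contra hA
  have hCc : Convex ℝ (closure (Cne m n)) := (Cne_convex m n).closure
  obtain ⟨f, hf⟩ := geometric_hahn_banach_point_open hCc.interior isOpen_interior hA
  -- pick an interior point
  obtain ⟨z, hz⟩ := Cne_interior_nonempty m n
  have hzc : z ∈ interior (closure (Cne m n)) :=
    interior_mono subset_closure hz
  have hfne : f ≠ 0 := by
    intro h0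
    have := hf z hzc
    rw [h0] at this
    simp at this
  -- f (AVec) ≤ 0
  have hA0 : f (AVec m n) ≤ 0 := by
    have hcombo : ∀ θ : ℝ, θ ∈ Set.Ioo (0:ℝ) 1 →
        f (AVec m n) < θ * f z := by
      intro θ hθ
      have hmem : θ • z + (1 - θ) • (0 : IndexSet m n → ℝ)
          ∈ interior (closure (Cne m n)) := by
        apply hCc.combo_interior_closure_mem_interior hzc
        · rw [closure_closure]; exact zero_mem_closure_Cne m n
        · exact hθ.1
        · linarith [hθ.2]
        · ring
      have := hf _ hmem
      simpa [smul_zero, _root_.map_smul, smul_eq_mul] using this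
    have htend : Filter.Tendsto (fun θ : ℝ => θ * f z)
        (nhdsWithin 0 (Set.Ioo (0:ℝ) 1)) (nhds 0) := by
      have : Filter.Tendsto (fun θ : ℝ => θ * f z) (nhds 0) (nhds (0 * f z)) :=
        (continuous_id.mul continuous_const).tendsto 0
      rw [zero_mul] at this
      exact this.mono_left nhdsWithin_le_nhds
    haveI : (nhdsWithin (0:ℝ) (Set.Ioo (0:ℝ) 1)).NeBot :=
      left_nhdsWithin_Ioo_neBot one_pos
    exact ge_of_tendsto htend
      (Filter.eventually_of_mem self_mem_nhdsWithin
        (fun θ hθ => (hcombo θ hθ).le))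
  -- 0 ≤ f w for w in the cone
  have hpos : ∀ p, 0 ≤ f (vMap m n p) := by
    intro p
    by_contra hneg
    push_neg at hneg
    set w := vMap m n p with hw
    set t : ℝ := max 1 ((2 * f (AVec m n) - f z) / f w) with hts
    have ht0 : 0 < t := lt_of_lt_of_le one_pos (le_max_left _ _)
    have hmem : (1/2 : ℝ) • (t • w) + (1/2 : ℝ) • z
        ∈ interior (closure (Cne m n)) := by
      apply hCc.combo_closure_interior_mem_interior
      · rw [closure_closure]
        exact subset_closure (Cne_smul m n ht0 (vMap_mem_Cne m n p))
      · exact hzc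
      · norm_num
      · norm_num
      · norm_num
    have hlt := hf _ hmem
    rw [map_add, _root_.map_smul, _root_.map_smul, _root_.map_smul] at hlt
    have htr : (2 * f (AVec m n) - f z) / f w ≤ t := le_max_right _ _
    have hfw : f w ≠ 0 := ne_of_lt hneg
    have : t * f w ≤ 2 * f (AVec m n) - f z := by
      have := mul_le_mul_of_nonpos_right htr (le_of_lt hneg)
      rwa [div_mul_cancel₀ _ hfw] at this
    simp only [smul_eq_mul] at hlt
    nlinarith
  have := key_lemma m n f hpos hA0
  exact hfne this

lemma interior_closure_subset_Cne (m n : ℕ) :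
    interior (closure (Cne m n)) ⊆ Cne m n := by
  obtain ⟨z, hz⟩ := Cne_interior_nonempty m n
  intro x hx
  by_cases hxz : x = z
  · exact interior_subset (hxz ▸ hz)
  obtain ⟨ε, hε, hball⟩ := Metric.isOpen_iff.1 isOpen_interior x hx
  set d : ℝ := ‖x - z‖ with hd
  have hd0 : 0 < d := by
    rw [hd, norm_pos_iff, sub_ne_zero]
    exact hxz
  set δ : ℝ := ε / (2 * d) with hδ
  have hδ0 : 0 < δ := by positivity
  set y : IndexSet m n → ℝ := x + δ • (x - z) with hy
  have hymem : y ∈ closure (Cne m n) := by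
    apply interior_subset
    apply hball
    rw [Metric.mem_ball, hy, dist_eq_norm]
    have : x + δ • (x - z) - x = δ • (x - z) := by abel
    rw [this, norm_smul, Real.norm_eq_abs, abs_of_pos hδ0, hδ]
    rw [div_mul_eq_mul_div]
    rw [div_lt_iff₀ (by positivity)]
    nlinarith
  have hcombo : x = (δ / (1 + δ)) • z + (1 / (1 + δ)) • y := by
    rw [hy]
    have h1δ : (1 + δ) ≠ 0 := by positivity
    match_scalars <;> field_simp <;> ring
  rw [hcombo]
  apply interior_subset (s := Cne m n)
  apply (Cne_convex m n).combo_interior_closure_mem_interior hz hymem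
  · positivity
  · positivity
  · field_simp
    ring

/-- With `N = #𝓘_m`, there are `M ≥ N` points `p₁,…,p_M ∈ ℝⁿ` and
positive coefficients `a₁,…,a_M` with `A = Σⱼ aⱼ v(pⱼ)`, such that `v(p₁),…,v(p_M)`
span `ℝᴺ` and the first `N` of them, `v(p₁),…,v(p_N)`, are linearly independent
(so the `N×N` matrix with these columns is invertible). -/
theorem stmt5 (m n : ℕ) (hm : 0 < m) (hn : 0 < n) :
    ∃ (M : ℕ) (hNM : Nat.card (IndexSet m n) ≤ M)
      (p : Fin M → (Fin n → ℝ)) (a : Fin M → ℝ),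
      (∀ j, 0 < a j) ∧
      AVec m n = ∑ j, a j • vMap m n (p j) ∧
      Submodule.span ℝ (Set.range fun j => vMap m n (p j)) = ⊤ ∧
      LinearIndependent ℝ
        (fun i : Fin (Nat.card (IndexSet m n)) => vMap m n (p (Fin.castLE hNM i))) := by
  classical
  set N := Nat.card (IndexSet m n) with hN
  -- extract a linearly independent spanning subset
  obtain ⟨b, hbsub, hbspan, hbindep⟩ :=
    exists_linearIndependent ℝ (Set.range (vMap m n))
  rw [span_vMap m n] at hbspan
  let B : Module.Basis b ℝ (IndexSet m n → ℝ) :=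
    Module.Basis.mk hbindep (by rw [Subtype.range_coe, hbspan])
  haveI : Fintype b := FiniteDimensional.fintypeBasisIndex B
  have hcard : Fintype.card b = N := by
    rw [hN, Nat.card_eq_fintype_card, ← Module.finrank_eq_card_basis B,
      Module.finrank_fintype_fun_eq_card]
  have e : Fin N ≃ b := (Fintype.equivFinOfCardEq hcard).symm
  set r : Fin N → (Fin n → ℝ) := fun i => (hbsub (e i).2).choose with hrdef
  have hr : ∀ i, vMap m n (r i) = ((e i : IndexSet m n → ℝ)) :=
    fun i => (hbsub (e i).2).choose_spec
  have hindep : LinearIndependent ℝ (fun i : Fin N => vMap m n (r i)) := by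
    have h1 : LinearIndependent ℝ (fun i : Fin N => ((e i : IndexSet m n → ℝ))) :=
      hbindep.comp e e.injective
    have : (fun i : Fin N => vMap m n (r i))
        = fun i : Fin N => ((e i : IndexSet m n → ℝ)) := funext hr
    rw [this]
    exact h1
  set S : IndexSet m n → ℝ := ∑ i, vMap m n (r i) with hS
  -- choose small ε
  have htend : Filter.Tendsto (fun ε : ℝ => AVec m n - ε • S)
      (nhdsWithin 0 (Set.Ioi 0)) (nhds (AVec m n)) := by
    have h1 : Filter.Tendsto (fun ε : ℝ => AVec m n - ε • S) (nhds 0)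
        (nhds (AVec m n - (0:ℝ) • S)) :=
      (continuous_const.sub (continuous_id.smul continuous_const)).tendsto 0
    rw [zero_smul, sub_zero] at h1
    exact h1.mono_left nhdsWithin_le_nhds
  have hev : ∀ᶠ ε : ℝ in nhdsWithin 0 (Set.Ioi 0),
      AVec m n - ε • S ∈ interior (closure (Cne m n)) :=
    htend.eventually (isOpen_interior.eventually_mem (AVec_mem_interior m n))
  obtain ⟨ε, hεmem, hε⟩ :=
    (hev.and (Filter.eventually_of_mem self_mem_nhdsWithin
      (fun x (hx : x ∈ Set.Ioi (0:ℝ)) => hx))).exists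
  have hA' : AVec m n - ε • S ∈ Cne m n :=
    interior_closure_subset_Cne m n hεmem
  obtain ⟨K, q, bb, hbb, hsum⟩ := hA'
  refine ⟨N + K, Nat.le_add_right N K, Fin.append r q,
    Fin.append (fun _ => ε) bb, ?_, ?_, ?_, ?_⟩
  · intro j
    refine Fin.addCases (fun i => ?_) (fun i => ?_) j
    · rw [Fin.append_left]; exact hε
    · rw [Fin.append_right]; exact hbb i
  · rw [Fin.sum_univ_add]
    have hleft : ∑ i : Fin N,
        (Fin.append (fun _ => ε) bb (Fin.castAdd K i)) •
          vMap m n (Fin.append r q (Fin.castAdd K i)) = ε • S := by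
      rw [hS, Finset.smul_sum]
      exact Finset.sum_congr rfl fun i _ => by rw [Fin.append_left, Fin.append_left]
    have hright : ∑ i : Fin K,
        (Fin.append (fun _ => ε) bb (Fin.natAdd N i)) •
          vMap m n (Fin.append r q (Fin.natAdd N i)) = AVec m n - ε • S := by
      rw [hsum]
      exact Finset.sum_congr rfl fun i _ => by rw [Fin.append_right, Fin.append_right]
    rw [hleft, hright]
    abel
  · rw [eq_top_iff, ← hbspan]
    apply Submodule.span_le.2
    intro w hw
    apply Submodule.subset_span
    refine ⟨Fin.castAdd K (e.symm ⟨w, hw⟩), ?_⟩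
    show vMap m n (Fin.append r q (Fin.castAdd K (e.symm ⟨w, hw⟩))) = w
    rw [Fin.append_left, hr, e.apply_symm_apply]
  · have hpt : ∀ i : Fin N, Fin.append r q (Fin.castLE (Nat.le_add_right N K) i) = r i := by
      intro i
      have h2 : Fin.castLE (Nat.le_add_right N K) i = Fin.castAdd K i := by
        apply Fin.ext; simp
      rw [h2, Fin.append_left]
    have : (fun i : Fin N => vMap m n (Fin.append r q (Fin.castLE (Nat.le_add_right N K) i)))
        = fun i : Fin N => vMap m n (r i) := funext fun i => by rw [hpt i]
    rw [this]
    exact hindep
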